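/- arXiv:2503.14925 — 3 statements merged into one kernel-verified Lean document; each statement's English description precedes it below -/
import Mathlib

section
/- Let (X, S, Y) be jointly distributed with binary sensitive attribute S ∈ {0,1}. For any classifier f with f(X) statistically independent of S, the misclassification probability satisfies P(f(X) ≠ Y) ≥ P(S = s_min) · TV(P_{Y|S=0}, P_{Y|S=1}), where s_min is the minority outcome of S (i.e., P(S = s_min) ≤ 1/2). -/
/-- Let (X, S, Y) be jointly distributed with S ∈ {0,1} (Bool),
both groups of positive probability. For any classifier f with f(X) independent
of S, the misclassification probability satisfies
`P(f(X) ≠ Y) ≥ P(S = s_min) · TV(P_{Y|S=0}, P_{Y|S=1})`,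
where `P(S = s_min) = min (P(S=0)) (P(S=1))`. -/
theorem dp_misclassification_lower_bound
    {𝒳 𝒴 : Type*} [Fintype 𝒳] [Fintype 𝒴] [DecidableEq 𝒴]
    (P : 𝒳 × Bool × 𝒴 → ℝ)
    (hP0 : ∀ z, 0 ≤ P z) (hP1 : ∑ z, P z = 1)
    (pS : Bool → ℝ) (hpS : ∀ s, pS s = ∑ x, ∑ y, P (x, s, y))
    (hpos : ∀ s, 0 < pS s)
    (f : 𝒳 → 𝒴)
    -- demographic parity: f(X) is independent of S
    (hindep : ∀ (y : 𝒴) (s : Bool),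
      (∑ x, ∑ y', if f x = y then P (x, s, y') else 0) =
      (∑ x, ∑ s', ∑ y', if f x = y then P (x, s', y') else 0) * pS s) :
    (∑ z : 𝒳 × Bool × 𝒴, if f z.1 ≠ z.2.2 then P z else 0) ≥
      min (pS false) (pS true) *
        ((1 / 2) * ∑ y, |(∑ x, P (x, false, y)) / pS false -
                         (∑ x, P (x, true, y)) / pS true|) := by
  classical
  set g : 𝒴 → ℝ := fun y => ∑ x, ∑ s', ∑ y', if f x = y then P (x, s', y') else 0 with hg
  set E : Bool → ℝ := fun s => ∑ x, ∑ y, if f x ≠ y then P (x, s, y) else 0 with hE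
  have hEnn : ∀ s, 0 ≤ E s := by
    intro s
    apply Finset.sum_nonneg; intro x _
    apply Finset.sum_nonneg; intro y _
    split <;> simp [hP0]
  -- key per-group bound
  have key : ∀ s : Bool, ∑ y, |g y * pS s - ∑ x, P (x, s, y)| ≤ 2 * E s := by
    intro s
    have step1 : ∀ y : 𝒴, |g y * pS s - ∑ x, P (x, s, y)| ≤
        (∑ x, ∑ y', if f x = y ∧ y' ≠ y then P (x, s, y') else 0)
        + ∑ x, (if f x ≠ y then P (x, s, y) else 0) := by
      intro y
      rw [← hindep y s, ← Finset.sum_sub_distrib, ← Finset.sum_add_distrib]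
      refine le_trans (Finset.abs_sum_le_sum_abs _ _) (Finset.sum_le_sum ?_)
      intro x _
      by_cases hfx : f x = y
      · subst hfx
        have hle : P (x, s, f x) ≤ ∑ y', P (x, s, y') :=
          Finset.single_le_sum (fun y' _ => hP0 (x, s, y')) (Finset.mem_univ (f x))
        have hsum : ∑ y', (if f x = f x then P (x, s, y') else 0) = ∑ y', P (x, s, y') := by
          simp
        have hsum2 : ∑ y', (if f x = f x ∧ y' ≠ f x then P (x, s, y') else 0)
            = (∑ y', P (x, s, y')) - P (x, s, f x) := by
          have h1 : ∀ y' : 𝒴, (if f x = f x ∧ y' ≠ f x then P (x, s, y') else 0)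
              = P (x, s, y') - (if y' = f x then P (x, s, y') else 0) := by
            intro y'; by_cases h : y' = f x <;> simp [h]
          rw [Finset.sum_congr rfl (fun y' _ => h1 y'), Finset.sum_sub_distrib]
          congr 1
          simp [Finset.sum_ite_eq']
        rw [hsum, hsum2, abs_of_nonneg (by linarith), if_neg (by simp)]
        linarith
      · have h0 : ∑ y', (if f x = y then P (x, s, y') else 0) = 0 := by simp [hfx]
        have h2 : ∑ y', (if f x = y ∧ y' ≠ y then P (x, s, y') else 0) = 0 := by simp [hfx]
        rw [h0, h2, if_pos hfx, zero_sub, abs_neg, abs_of_nonneg (hP0 (x, s, y)), zero_add]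
    calc ∑ y, |g y * pS s - ∑ x, P (x, s, y)|
        ≤ ∑ y, ((∑ x, ∑ y', if f x = y ∧ y' ≠ y then P (x, s, y') else 0)
          + ∑ x, (if f x ≠ y then P (x, s, y) else 0)) := Finset.sum_le_sum (fun y _ => step1 y)
      _ = (∑ y, ∑ x, ∑ y', if f x = y ∧ y' ≠ y then P (x, s, y') else 0)
          + ∑ y, ∑ x, (if f x ≠ y then P (x, s, y) else 0) := Finset.sum_add_distrib
      _ = E s + E s := by
          congr 1
          · rw [Finset.sum_comm]
            refine Finset.sum_congr rfl (fun x _ => ?_)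
            rw [Finset.sum_comm]
            refine Finset.sum_congr rfl (fun y' _ => ?_)
            have : ∀ y : 𝒴, (if f x = y ∧ y' ≠ y then P (x, s, y') else 0)
                = if f x = y then (if y' ≠ y then P (x, s, y') else 0) else 0 := by
              intro y; by_cases h : f x = y <;> simp [h]
            rw [Finset.sum_congr rfl (fun y _ => this y), Finset.sum_ite_eq]
            simp only [Finset.mem_univ, if_true, ne_eq]
            by_cases h : y' = f x <;> simp [h, Ne, eq_comm]
          · rw [Finset.sum_comm]
      _ = 2 * E s := by ring
  have h0 := hpos false
  have h1 := hpos true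
  have hLHS : (∑ z : 𝒳 × Bool × 𝒴, if f z.1 ≠ z.2.2 then P z else 0) = E true + E false := by
    rw [Fintype.sum_prod_type]
    simp only [Fintype.sum_prod_type, Fintype.sum_bool]
    rw [Finset.sum_add_distrib]
  have htri : ∑ y, |(∑ x, P (x, false, y)) / pS false - (∑ x, P (x, true, y)) / pS true|
      ≤ 2 * E false / pS false + 2 * E true / pS true := by
    have hb : ∀ y, |(∑ x, P (x, false, y)) / pS false - (∑ x, P (x, true, y)) / pS true|
        ≤ |g y * pS false - ∑ x, P (x, false, y)| / pS false
          + |g y * pS true - ∑ x, P (x, true, y)| / pS true := by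
      intro y
      have e0 : (∑ x, P (x, false, y)) / pS false - g y
          = -((g y * pS false - ∑ x, P (x, false, y)) / pS false) := by
        field_simp; ring
      have e1 : g y - (∑ x, P (x, true, y)) / pS true
          = (g y * pS true - ∑ x, P (x, true, y)) / pS true := by
        field_simp
      calc |(∑ x, P (x, false, y)) / pS false - (∑ x, P (x, true, y)) / pS true|
          = |((∑ x, P (x, false, y)) / pS false - g y)
              + (g y - (∑ x, P (x, true, y)) / pS true)| := by ring_nf
        _ ≤ |(∑ x, P (x, false, y)) / pS false - g y|
              + |g y - (∑ x, P (x, true, y)) / pS true| := abs_add_le _ _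
        _ = |g y * pS false - ∑ x, P (x, false, y)| / pS false
              + |g y * pS true - ∑ x, P (x, true, y)| / pS true := by
            rw [e0, e1, abs_neg, abs_div, abs_div, abs_of_pos h0, abs_of_pos h1]
    calc ∑ y, |(∑ x, P (x, false, y)) / pS false - (∑ x, P (x, true, y)) / pS true|
        ≤ ∑ y, (|g y * pS false - ∑ x, P (x, false, y)| / pS false
          + |g y * pS true - ∑ x, P (x, true, y)| / pS true) :=
          Finset.sum_le_sum (fun y _ => hb y)
      _ = (∑ y, |g y * pS false - ∑ x, P (x, false, y)|) / pS false
          + (∑ y, |g y * pS true - ∑ x, P (x, true, y)|) / pS true := by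
          rw [Finset.sum_add_distrib, ← Finset.sum_div, ← Finset.sum_div]
      _ ≤ 2 * E false / pS false + 2 * E true / pS true := by
          gcongr
          · exact key false
          · exact key true
  rw [ge_iff_le, hLHS]
  have hmnn : 0 ≤ min (pS false) (pS true) := le_min h0.le h1.le
  have hm0 : min (pS false) (pS true) ≤ pS false := min_le_left _ _
  have hm1 : min (pS false) (pS true) ≤ pS true := min_le_right _ _
  have b0 : min (pS false) (pS true) * (E false / pS false) ≤ E false := by
    have hd : min (pS false) (pS true) / pS false ≤ 1 := (div_le_one h0).mpr hm0
    calc min (pS false) (pS true) * (E false / pS false)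
        = E false * (min (pS false) (pS true) / pS false) := by ring
      _ ≤ E false * 1 := mul_le_mul_of_nonneg_left hd (hEnn false)
      _ = E false := mul_one _
  have b1 : min (pS false) (pS true) * (E true / pS true) ≤ E true := by
    have hd : min (pS false) (pS true) / pS true ≤ 1 := (div_le_one h1).mpr hm1
    calc min (pS false) (pS true) * (E true / pS true)
        = E true * (min (pS false) (pS true) / pS true) := by ring
      _ ≤ E true * 1 := mul_le_mul_of_nonneg_left hd (hEnn true)
      _ = E true := mul_one _
  have r0 : 2 * E false / pS false = 2 * (E false / pS false) := mul_div_assoc _ _ _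
  have r1 : 2 * E true / pS true = 2 * (E true / pS true) := mul_div_assoc _ _ _
  have hT : (1 / 2 : ℝ) * ∑ y, |(∑ x, P (x, false, y)) / pS false
        - (∑ x, P (x, true, y)) / pS true|
      ≤ E false / pS false + E true / pS true := by linarith
  calc min (pS false) (pS true) * ((1 / 2) * ∑ y, |(∑ x, P (x, false, y)) / pS false
        - (∑ x, P (x, true, y)) / pS true|)
      ≤ min (pS false) (pS true) * (E false / pS false + E true / pS true) :=
        mul_le_mul_of_nonneg_left hT hmnn
    _ = min (pS false) (pS true) * (E false / pS false)
        + min (pS false) (pS true) * (E true / pS true) := mul_add _ _ _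
    _ ≤ E true + E false := by linarith
end

section
/- Under the conditions of the demographic parity lower bound, the bound P(f(X) ≠ Y) ≥ P(S = s_min) · TV(P_{Y|S=s_max}, P_{Y|S=s_min}) is achieved (in the sense of distribution matching) by any demographic-parity-satisfying randomized decision rule whose output distribution equals P_{Y|S=s_max}, provided for each s there exists a coupling attaining the total variation and the prediction can be coupled with Y optimally given S. Formally: inf over conditional distributions Q_{Ŷ|X,S} with Ŷ ⟂ S of P(Ŷ ≠ Y) equals P(S = s_min) · TV(P_{Y|S=0}, P_{Y|S=1}) when X = (Y, S) is fully informative (i.e., Y is a deterministic function of X). -/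
open Finset

lemma dp_collapse {𝒳 𝒴 : Type*} [Fintype 𝒳] [Fintype 𝒴] [DecidableEq 𝒴]
    (yfun : 𝒳 → 𝒴) (g : 𝒳 → 𝒴 → ℝ) :
    ∑ x, g x (yfun x) = ∑ y, ∑ x, if yfun x = y then g x y else 0 := by
  rw [Finset.sum_comm]
  refine Finset.sum_congr rfl fun x _ => ?_
  simp

lemma dp_collapse_mul {𝒳 𝒴 : Type*} [Fintype 𝒳] [Fintype 𝒴] [DecidableEq 𝒴]
    (yfun : 𝒳 → 𝒴) (h : 𝒳 → ℝ) (K : 𝒴 → ℝ) :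
    ∑ x, h x * K (yfun x) = ∑ y, (∑ x, if yfun x = y then h x else 0) * K y := by
  rw [dp_collapse yfun (fun x y => h x * K y)]
  refine Finset.sum_congr rfl fun y _ => ?_
  rw [Finset.sum_mul]
  refine Finset.sum_congr rfl fun x _ => ?_
  split <;> simp

lemma dp_achieve {𝒳 𝒴 : Type*} [Fintype 𝒳] [Fintype 𝒴] [DecidableEq 𝒴]
    (P : 𝒳 × Bool → ℝ) (hP0 : ∀ z, 0 ≤ P z)
    (pS : Bool → ℝ) (hpS : ∀ s, pS s = ∑ x, P (x, s)) (hpos : ∀ s, 0 < pS s)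
    (yfun : 𝒳 → 𝒴) (s0 : Bool) :
    ∃ Q : 𝒳 → Bool → 𝒴 → ℝ,
      (∀ x s y, 0 ≤ Q x s y) ∧ (∀ x s, ∑ y, Q x s y = 1) ∧
      (∀ y : 𝒴, (∑ x, P (x, s0) * Q x s0 y) / pS s0 =
                (∑ x, P (x, !s0) * Q x (!s0) y) / pS (!s0)) ∧
      ∑ x, ∑ s, P (x, s) * (1 - Q x s (yfun x)) =
        pS s0 * (1 - ∑ y, min ((∑ x, if yfun x = y then P (x, s0) else 0) / pS s0)
                             ((∑ x, if yfun x = y then P (x, !s0) else 0) / pS (!s0))) := by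
  set p0 : 𝒴 → ℝ := fun y => (∑ x, if yfun x = y then P (x, s0) else 0) / pS s0 with hp0
  set p1 : 𝒴 → ℝ := fun y => (∑ x, if yfun x = y then P (x, !s0) else 0) / pS (!s0) with hp1
  set a : 𝒴 → ℝ := fun y => min (p0 y) (p1 y) with ha
  set D : ℝ := ∑ y, (p0 y - a y) with hD
  have hfib : ∀ (s : Bool) (y : 𝒴), 0 ≤ ∑ x, if yfun x = y then P (x, s) else 0 := by
    intro s y
    exact Finset.sum_nonneg fun x _ => by split <;> [exact hP0 _; exact le_rfl]
  have hp0nn : ∀ y, 0 ≤ p0 y := fun y => div_nonneg (hfib s0 y) (hpos s0).le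
  have hp1nn : ∀ y, 0 ≤ p1 y := fun y => div_nonneg (hfib (!s0) y) (hpos (!s0)).le
  have hann : ∀ y, 0 ≤ a y := fun y => le_min (hp0nn y) (hp1nn y)
  have hfibsum : ∀ s : Bool, ∑ y, ∑ x, (if yfun x = y then P (x, s) else 0) = pS s := by
    intro s
    rw [← dp_collapse yfun (fun x y => P (x, s)), hpS]
  have hp0sum : ∑ y, p0 y = 1 := by
    simp only [hp0, ← Finset.sum_div, hfibsum s0, div_self (hpos s0).ne']
  have hp1sum : ∑ y, p1 y = 1 := by
    simp only [hp1, ← Finset.sum_div, hfibsum (!s0), div_self (hpos (!s0)).ne']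
  have hDnn : 0 ≤ D := Finset.sum_nonneg fun y _ => by
    simp only [sub_nonneg]; exact min_le_left _ _
  have hD1 : D = ∑ y, (p1 y - a y) := by
    rw [hD, Finset.sum_sub_distrib, Finset.sum_sub_distrib, hp0sum, hp1sum]
  have hD0a : D = 0 → ∀ y, p0 y - a y = 0 := by
    intro h y
    refine (Finset.sum_eq_zero_iff_of_nonneg (fun y _ => ?_)).mp (by rw [← hD]; exact h) y (Finset.mem_univ y)
    simp only [sub_nonneg]; exact min_le_left _ _
  have hD0b : D = 0 → ∀ y, p1 y - a y = 0 := by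
    intro h y
    refine (Finset.sum_eq_zero_iff_of_nonneg (fun y _ => ?_)).mp (by rw [← hD1]; exact h) y (Finset.mem_univ y)
    simp only [sub_nonneg]; exact min_le_right _ _
  -- the coupling kernel
  set K : 𝒴 → 𝒴 → ℝ := fun y y' =>
    if p0 y = 0 then (if y' = y then 1 else 0)
    else (if y' = y then a y / p0 y else 0) +
      (p0 y - a y) * (p1 y' - a y') / (p0 y * D) with hK
  have hKnn : ∀ y y', 0 ≤ K y y' := by
    intro y y'
    simp only [hK]
    split
    · split <;> norm_num
    · rename_i hne
      have hp0pos : 0 < p0 y := lt_of_le_of_ne (hp0nn y) (Ne.symm hne)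
      have h1 : (0:ℝ) ≤ (if y' = y then a y / p0 y else 0) := by
        split
        · exact div_nonneg (hann y) hp0pos.le
        · exact le_rfl
      have h2 : (0:ℝ) ≤ (p0 y - a y) * (p1 y' - a y') / (p0 y * D) := by
        apply div_nonneg
        · apply mul_nonneg <;> simp only [sub_nonneg]
          · exact min_le_left _ _
          · exact min_le_right _ _
        · exact mul_nonneg hp0pos.le hDnn
      linarith
  have hrow : ∀ y, ∑ y', K y y' = 1 := by
    intro y
    simp only [hK]
    split
    · simp
    · rename_i hne
      have hp0pos : 0 < p0 y := lt_of_le_of_ne (hp0nn y) (Ne.symm hne)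
      rw [Finset.sum_add_distrib]
      have e1 : ∑ y', (if y' = y then a y / p0 y else 0) = a y / p0 y := by simp
      have e2 : ∑ y', (p0 y - a y) * (p1 y' - a y') / (p0 y * D)
          = (p0 y - a y) * D / (p0 y * D) := by
        rw [← Finset.sum_div, ← Finset.mul_sum, ← hD1]
      rw [e1, e2]
      rcases eq_or_ne D 0 with hDz | hDz
      · have := hD0a hDz y
        have hay : a y = p0 y := by linarith
        rw [hDz, hay]
        field_simp
        simp
      · field_simp
        ring
  have hpt : ∀ y y', p0 y * K y y' =
      (if y' = y then a y else 0) + (p0 y - a y) * (p1 y' - a y') / D := by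
    intro y y'
    simp only [hK]
    split
    · rename_i hz
      have haz : a y = 0 := le_antisymm (by rw [← hz]; exact min_le_left _ _) (hann y)
      rw [hz, haz]
      simp
    · rename_i hne
      have e1 : p0 y * (if y' = y then a y / p0 y else 0) = (if y' = y then a y else 0) := by
        split
        · field_simp
        · ring
      have e2 : p0 y * ((p0 y - a y) * (p1 y' - a y') / (p0 y * D)) =
          (p0 y - a y) * (p1 y' - a y') / D := by
        rcases eq_or_ne D 0 with hDz | hDz
        · have h1 := hD0a hDz y
          rw [hDz]
          simp [h1]
        · field_simp
      rw [mul_add, e1, e2]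
  have hmass : ∀ y', ∑ y, p0 y * K y y' = p1 y' := by
    intro y'
    simp only [hpt]
    rw [Finset.sum_add_distrib]
    have e1 : ∑ y, (if y' = y then a y else 0) = a y' := by simp
    have e2 : ∑ y, (p0 y - a y) * (p1 y' - a y') / D = D * (p1 y' - a y') / D := by
      rw [← Finset.sum_div, ← Finset.sum_mul, ← hD]
    rw [e1, e2]
    rcases eq_or_ne D 0 with hDz | hDz
    · have h1 := hD0b hDz y'
      rw [hDz]
      simp
      linarith
    · rw [mul_comm D, mul_div_assoc, div_self hDz, mul_one]
      ring
  have hdiag : ∀ y, p0 y * K y y = a y := by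
    intro y
    have hz : (p0 y - a y) * (p1 y - a y) = 0 := by
      rcases le_total (p0 y) (p1 y) with h | h
      · have h2 : a y = p0 y := min_eq_left h
        rw [h2]; ring
      · have h2 : a y = p1 y := min_eq_right h
        rw [h2]; ring
    rw [hpt, hz, zero_div, add_zero, if_pos rfl]
  have hfibp0 : ∀ y0, (∑ x, if yfun x = y0 then P (x, s0) else 0) = pS s0 * p0 y0 := by
    intro y0
    rw [hp0]
    dsimp only
    rw [mul_comm, div_mul_cancel₀ _ (hpos s0).ne']
  refine ⟨fun x s y' => if s = s0 then K (yfun x) y' else (if y' = yfun x then 1 else 0),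
    ?_, ?_, ?_, ?_⟩
  · intro x s y
    dsimp only
    split
    · exact hKnn _ _
    · split <;> norm_num
  · intro x s
    dsimp only
    split
    · exact hrow _
    · simp
  · intro y
    simp only [eq_self_iff_true, if_true, if_neg (Bool.not_ne_self s0)]
    have hL2 : ∑ x, P (x, s0) * K (yfun x) y = pS s0 * p1 y := by
      rw [dp_collapse_mul yfun (fun x => P (x, s0)) (fun y0 => K y0 y)]
      simp only [hfibp0, mul_assoc]
      rw [← Finset.mul_sum, hmass]
    have hR2 : ∑ x, P (x, !s0) * (if y = yfun x then 1 else 0) = pS (!s0) * p1 y := by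
      have e : ∀ x, P (x, !s0) * (if y = yfun x then 1 else 0) =
          (if yfun x = y then P (x, !s0) else 0) := by
        intro x
        by_cases h : y = yfun x
        · simp [h]
        · rw [if_neg h, mul_zero, if_neg (fun hh => h hh.symm)]
      rw [Finset.sum_congr rfl (fun x _ => e x), hp1]
      dsimp only
      rw [mul_comm, div_mul_cancel₀ _ (hpos (!s0)).ne']
    rw [hL2, hR2, mul_div_cancel_left₀ _ (hpos s0).ne',
      mul_div_cancel_left₀ _ (hpos (!s0)).ne']
  · simp only [eq_self_iff_true, if_true]
    have hsums : ∀ x : 𝒳, ∑ s : Bool, P (x, s) *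
        (1 - if s = s0 then K (yfun x) (yfun x) else 1) =
        P (x, s0) * (1 - K (yfun x) (yfun x)) := by
      intro x
      have hb : ∀ g : Bool → ℝ, ∑ s, g s = g s0 + g (!s0) := by
        intro g
        cases s0 <;> simp [Fintype.sum_bool] <;> ring
      rw [hb]
      simp [Bool.not_ne_self s0]
    simp only [hsums]
    have e3 : ∑ x, P (x, s0) * (1 - K (yfun x) (yfun x)) =
        pS s0 - ∑ x, P (x, s0) * K (yfun x) (yfun x) := by
      simp only [mul_sub, mul_one]
      rw [Finset.sum_sub_distrib, hpS]
    have e4 : ∑ x, P (x, s0) * K (yfun x) (yfun x) = pS s0 * ∑ y, a y := by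
      rw [dp_collapse_mul yfun (fun x => P (x, s0)) (fun y0 => K y0 y0)]
      simp only [hfibp0, mul_assoc, hdiag]
      rw [← Finset.mul_sum]
    rw [e3, e4]
    ring

lemma dp_tv_min {𝒴 : Type*} [Fintype 𝒴] (p q : 𝒴 → ℝ)
    (hp1 : ∑ y, p y = 1) (hq1 : ∑ y, q y = 1) :
    1 - ∑ y, min (p y) (q y) = (1/2 : ℝ) * ∑ y, |p y - q y| := by
  have h : ∀ y, |p y - q y| = p y + q y - 2 * min (p y) (q y) := by
    intro y; rcases le_total (p y) (q y) with h | h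
    · rw [min_eq_left h, abs_of_nonpos (by linarith)]; ring
    · rw [min_eq_right h, abs_of_nonneg (by linarith)]; ring
  simp only [h]
  rw [Finset.sum_sub_distrib, Finset.sum_add_distrib, hp1, hq1, ← Finset.mul_sum]
  ring



/-- In the noiseless (fully informative) case where Y is a
deterministic function `yfun` of X, the infimum over demographic-parity
randomized decision rules `Q_{Ŷ|X,S}` of the risk `P(Ŷ ≠ Y)` equals
`P(S = s_min) · TV(P_{Y|S=0}, P_{Y|S=1})`, where `P(S = s_min) = min (P(S=0)) (P(S=1))`. -/
theorem dp_bound_achieved_noiseless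
    {𝒳 𝒴 : Type*} [Fintype 𝒳] [Fintype 𝒴] [DecidableEq 𝒴]
    (P : 𝒳 × Bool → ℝ)
    (hP0 : ∀ z, 0 ≤ P z) (hP1 : ∑ z, P z = 1)
    (pS : Bool → ℝ) (hpS : ∀ s, pS s = ∑ x, P (x, s))
    (hpos : ∀ s, 0 < pS s)
    (yfun : 𝒳 → 𝒴) :
    IsGLB
      {r : ℝ | ∃ Q : 𝒳 → Bool → 𝒴 → ℝ,
        (∀ x s y, 0 ≤ Q x s y) ∧ (∀ x s, ∑ y, Q x s y = 1) ∧
        -- demographic parity: the output distribution of Ŷ given S = s is the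
        -- same for both values of s
        (∀ y : 𝒴, (∑ x, P (x, false) * Q x false y) / pS false =
                  (∑ x, P (x, true) * Q x true y) / pS true) ∧
        r = ∑ x, ∑ s, P (x, s) * (1 - Q x s (yfun x))}
      (min (pS false) (pS true) *
        ((1 / 2) * ∑ y,
          |(∑ x, if yfun x = y then P (x, false) else 0) / pS false -
           (∑ x, if yfun x = y then P (x, true) else 0) / pS true|)) := by

  have hpc1 : ∀ s : Bool, ∑ y, (∑ x, if yfun x = y then P (x, s) else 0) / pS s = 1 := by
    intro s
    rw [← Finset.sum_div, ← dp_collapse yfun (fun x y => P (x, s)), ← hpS,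
      div_self (hpos s).ne']
  constructor
  · rintro r ⟨Q, hQ0, hQ1, hDP, rfl⟩
    have hqs : ∀ (s : Bool) y, ∑ x, P (x, s) * Q x s y =
        pS s * ((∑ x, P (x, false) * Q x false y) / pS false) := by
      intro s y
      cases s
      · rw [mul_comm, div_mul_cancel₀ _ (hpos false).ne']
      · rw [hDP y, mul_comm, div_mul_cancel₀ _ (hpos true).ne']
    have hq1 : ∑ y, (∑ x, P (x, false) * Q x false y) / pS false = 1 := by
      rw [← Finset.sum_div, Finset.sum_comm]
      have e : ∀ x, ∑ y, P (x, false) * Q x false y = P (x, false) := by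
        intro x; rw [← Finset.mul_sum, hQ1, mul_one]
      rw [Finset.sum_congr rfl fun x _ => e x, ← hpS, div_self (hpos false).ne']
    have hQle1 : ∀ x s y, Q x s y ≤ 1 := by
      intro x s y
      calc Q x s y ≤ ∑ y', Q x s y' :=
            Finset.single_le_sum (fun y' _ => hQ0 x s y') (Finset.mem_univ y)
        _ = 1 := hQ1 x s
    have key : ∀ s : Bool, ∑ x, P (x, s) * Q x s (yfun x) ≤
        pS s * ∑ y, min ((∑ x, if yfun x = y then P (x, s) else 0) / pS s)
          ((∑ x, P (x, false) * Q x false y) / pS false) := by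
      intro s
      rw [dp_collapse yfun (fun x y => P (x, s) * Q x s y), Finset.mul_sum]
      refine Finset.sum_le_sum fun y _ => ?_
      rw [mul_min_of_nonneg _ _ (hpos s).le]
      refine le_min ?_ ?_
      · calc ∑ x, (if yfun x = y then P (x, s) * Q x s y else 0)
            ≤ ∑ x, (if yfun x = y then P (x, s) else 0) := by
              refine Finset.sum_le_sum fun x _ => ?_
              split
              · exact mul_le_of_le_one_right (hP0 _) (hQle1 _ _ _)
              · exact le_rfl
          _ = pS s * ((∑ x, if yfun x = y then P (x, s) else 0) / pS s) := by
              rw [mul_comm, div_mul_cancel₀ _ (hpos s).ne']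
      · calc ∑ x, (if yfun x = y then P (x, s) * Q x s y else 0)
            ≤ ∑ x, P (x, s) * Q x s y := by
              refine Finset.sum_le_sum fun x _ => ?_
              split
              · exact le_rfl
              · exact mul_nonneg (hP0 _) (hQ0 _ _ _)
          _ = pS s * ((∑ x, P (x, false) * Q x false y) / pS false) := hqs s y
    have hrisk : ∑ x, ∑ s, P (x, s) * (1 - Q x s (yfun x)) =
        (pS false - ∑ x, P (x, false) * Q x false (yfun x)) +
        (pS true - ∑ x, P (x, true) * Q x true (yfun x)) := by
      rw [Finset.sum_comm, Fintype.sum_bool]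
      simp only [mul_sub, mul_one]
      rw [Finset.sum_sub_distrib, Finset.sum_sub_distrib, ← hpS, ← hpS]
      ring
    have htvf := dp_tv_min (fun y => (∑ x, if yfun x = y then P (x, false) else 0) / pS false)
      (fun y => (∑ x, P (x, false) * Q x false y) / pS false) (hpc1 false) hq1
    have htvt := dp_tv_min (fun y => (∑ x, if yfun x = y then P (x, true) else 0) / pS true)
      (fun y => (∑ x, P (x, false) * Q x false y) / pS false) (hpc1 true) hq1
    have htri : ∑ y, |(∑ x, if yfun x = y then P (x, false) else 0) / pS false -
          (∑ x, if yfun x = y then P (x, true) else 0) / pS true|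
        ≤ (∑ y, |(∑ x, if yfun x = y then P (x, false) else 0) / pS false -
            (∑ x, P (x, false) * Q x false y) / pS false|) +
          ∑ y, |(∑ x, if yfun x = y then P (x, true) else 0) / pS true -
            (∑ x, P (x, false) * Q x false y) / pS false| := by
      rw [← Finset.sum_add_distrib]
      refine Finset.sum_le_sum fun y _ => ?_
      calc |(∑ x, if yfun x = y then P (x, false) else 0) / pS false -
            (∑ x, if yfun x = y then P (x, true) else 0) / pS true|
          ≤ |(∑ x, if yfun x = y then P (x, false) else 0) / pS false -
              (∑ x, P (x, false) * Q x false y) / pS false| +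
            |(∑ x, P (x, false) * Q x false y) / pS false -
              (∑ x, if yfun x = y then P (x, true) else 0) / pS true| :=
            abs_sub_le _ _ _
        _ = _ := by rw [abs_sub_comm ((∑ x, P (x, false) * Q x false y) / pS false)]
    have habs0f : (0:ℝ) ≤ ∑ y, |(∑ x, if yfun x = y then P (x, false) else 0) / pS false -
        (∑ x, P (x, false) * Q x false y) / pS false| :=
      Finset.sum_nonneg fun y _ => abs_nonneg _
    have habs0t : (0:ℝ) ≤ ∑ y, |(∑ x, if yfun x = y then P (x, true) else 0) / pS true -
        (∑ x, P (x, false) * Q x false y) / pS false| :=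
      Finset.sum_nonneg fun y _ => abs_nonneg _
    have hm0 : (0:ℝ) ≤ min (pS false) (pS true) := le_min (hpos false).le (hpos true).le
    have hmf : min (pS false) (pS true) ≤ pS false := min_le_left _ _
    have hmt : min (pS false) (pS true) ≤ pS true := min_le_right _ _
    rw [hrisk]
    have kf := key false
    have kt := key true
    nlinarith [mul_le_mul_of_nonneg_right hmf habs0f, mul_le_mul_of_nonneg_right hmt habs0t,
      mul_le_mul_of_nonneg_left htri hm0]
  · intro b hb
    rcases le_total (pS false) (pS true) with hle | hle
    · obtain ⟨Q, h0, h1, hdp, hr⟩ := dp_achieve P hP0 pS hpS hpos yfun false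
      simp only [Bool.not_false] at hdp hr
      refine hb ⟨Q, h0, h1, hdp, ?_⟩
      rw [hr, min_eq_left hle]
      have htv := dp_tv_min (fun y => (∑ x, if yfun x = y then P (x, false) else 0) / pS false)
        (fun y => (∑ x, if yfun x = y then P (x, true) else 0) / pS true)
        (hpc1 false) (hpc1 true)
      rw [← htv]
    · obtain ⟨Q, h0, h1, hdp, hr⟩ := dp_achieve P hP0 pS hpS hpos yfun true
      simp only [Bool.not_true] at hdp hr
      refine hb ⟨Q, h0, h1, fun y => (hdp y).symm, ?_⟩
      rw [hr, min_eq_right hle]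
      have htv := dp_tv_min (fun y => (∑ x, if yfun x = y then P (x, true) else 0) / pS true)
        (fun y => (∑ x, if yfun x = y then P (x, false) else 0) / pS false)
        (hpc1 true) (hpc1 false)
      have habs : ∑ y, |(∑ x, if yfun x = y then P (x, false) else 0) / pS false -
            (∑ x, if yfun x = y then P (x, true) else 0) / pS true| =
          ∑ y, |(∑ x, if yfun x = y then P (x, true) else 0) / pS true -
            (∑ x, if yfun x = y then P (x, false) else 0) / pS false| :=
        Finset.sum_congr rfl fun y _ => abs_sub_comm _ _
      rw [habs, ← htv]
end

section
/- The minimization over conditional distributions Q_{Ŷ|X,S} of E_{P_{X,S}}[TV(Q_{Ŷ|X=x,S=s}, P_{Y|X=x,S=s})] subject to a fairness constraint E_{s∼P_S}[d(Q_{Ŷ|S=s}, Q_{Ŷ})] ≤ ε is equivalent to the joint-coupling optimal transport problem: minimize E_{P_{X,S} × Q_{Y,Ŷ|X,S}}[1{Ŷ ≠ Y}] over joint conditionals Q_{Y,Ŷ|X,S} subject to the marginal constraint Q_{Y|X,S} = P_{Y|X,S} and the same fairness constraint on Q_{Ŷ}; the two problems have the same optimal value. -/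
open Finset

lemma coupling_exists {𝒴 : Type*} [Fintype 𝒴] [DecidableEq 𝒴]
    (p q : 𝒴 → ℝ) (hp0 : ∀ y, 0 ≤ p y) (hq0 : ∀ y, 0 ≤ q y)
    (hp1 : ∑ y, p y = 1) (hq1 : ∑ y, q y = 1) :
    ∃ J : 𝒴 × 𝒴 → ℝ, (∀ z, 0 ≤ J z) ∧
      (∀ y, ∑ yh, J (y, yh) = p y) ∧
      (∀ yh, ∑ y, J (y, yh) = q yh) ∧
      (∑ z : 𝒴 × 𝒴, if z.2 ≠ z.1 then J z else 0) = (1/2) * ∑ y, |q y - p y| := by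
  classical
  set m : 𝒴 → ℝ := fun y => min (p y) (q y) with hm
  set T : ℝ := ∑ y, (p y - m y) with hT
  have hm0 : ∀ y, 0 ≤ p y - m y := fun y => sub_nonneg.2 (min_le_left _ _)
  have hm0q : ∀ y, 0 ≤ q y - m y := fun y => sub_nonneg.2 (min_le_right _ _)
  have hTq : ∑ y, (q y - m y) = T := by
    rw [hT, Finset.sum_sub_distrib, Finset.sum_sub_distrib, hp1, hq1]
  have hT0 : 0 ≤ T := Finset.sum_nonneg fun y _ => hm0 y
  have hprod : ∀ y, (p y - m y) * (q y - m y) = 0 := by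
    intro y
    rcases le_total (p y) (q y) with h | h
    · rw [hm]; simp [min_eq_left h]
    · rw [hm]; simp [min_eq_right h]
  have hmy : ∀ y, m y = min (p y) (q y) := fun y => rfl
  have habs : ∀ y, |q y - p y| = (p y - m y) + (q y - m y) := by
    intro y
    rcases le_total (p y) (q y) with h | h
    · rw [abs_of_nonneg (by linarith), hmy, min_eq_left h]; ring
    · rw [abs_of_nonpos (by linarith), hmy, min_eq_right h]; ring
  have hle_p : ∀ y, p y - m y ≤ T :=
    fun y => Finset.single_le_sum (fun i _ => hm0 i) (mem_univ y)
  have hle_q : ∀ y, q y - m y ≤ T := by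
    intro y
    rw [← hTq]
    exact Finset.single_le_sum (fun i _ => hm0q i) (mem_univ y)
  have hdivT : ∀ a : ℝ, 0 ≤ a → a ≤ T → a * T / T = a := by
    intro a ha haT
    rcases hT0.eq_or_lt with h | h
    · have : a = 0 := le_antisymm (by linarith) ha
      simp [this]
    · rw [mul_div_assoc, div_self h.ne', mul_one]
  refine ⟨fun z => if z.1 = z.2 then m z.1 else (p z.1 - m z.1) * (q z.2 - m z.2) / T,
    ?_, ?_, ?_, ?_⟩
  · intro z
    dsimp only
    split_ifs with h
    · exact le_min (hp0 _) (hq0 _)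
    · exact div_nonneg (mul_nonneg (hm0 _) (hm0q _)) hT0
  · intro y
    rw [← Finset.add_sum_erase _ _ (mem_univ y)]
    dsimp only
    have h1 : (if y = y then m y else (p y - m y) * (q y - m y) / T) = m y := by simp
    have h2 : ∑ yh ∈ univ.erase y,
        (if y = yh then m y else (p y - m y) * (q yh - m yh) / T)
        = (p y - m y) := by
      have : ∀ yh ∈ univ.erase y,
          (if y = yh then m y else (p y - m y) * (q yh - m yh) / T)
          = (p y - m y) * (q yh - m yh) / T := by
        intro yh hyh
        rw [if_neg (Ne.symm (Finset.ne_of_mem_erase hyh))]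
      rw [Finset.sum_congr rfl this]
      have hsum : ∑ yh ∈ univ.erase y, (q yh - m yh) = T - (q y - m y) := by
        rw [Finset.sum_erase_eq_sub (mem_univ y), hTq]
      calc ∑ yh ∈ univ.erase y, (p y - m y) * (q yh - m yh) / T
          = (p y - m y) * (∑ yh ∈ univ.erase y, (q yh - m yh)) / T := by
            rw [Finset.mul_sum, Finset.sum_div]
        _ = (p y - m y) * T / T := by
            rw [hsum, mul_sub, hprod y, sub_zero]
        _ = p y - m y := hdivT _ (hm0 y) (hle_p y)
    rw [h1, h2]
    ring
  · intro yh
    rw [← Finset.add_sum_erase _ _ (mem_univ yh)]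
    dsimp only
    have h1 : (if yh = yh then m yh else (p yh - m yh) * (q yh - m yh) / T) = m yh := by simp
    have h2 : ∑ y ∈ univ.erase yh,
        (if y = yh then m y else (p y - m y) * (q yh - m yh) / T)
        = (q yh - m yh) := by
      have : ∀ y ∈ univ.erase yh,
          (if y = yh then m y else (p y - m y) * (q yh - m yh) / T)
          = (p y - m y) * (q yh - m yh) / T := by
        intro y hy
        rw [if_neg (Finset.ne_of_mem_erase hy)]
      rw [Finset.sum_congr rfl this]
      have hsum : ∑ y ∈ univ.erase yh, (p y - m y) = T - (p yh - m yh) := by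
        rw [Finset.sum_erase_eq_sub (mem_univ yh)]
      calc ∑ y ∈ univ.erase yh, (p y - m y) * (q yh - m yh) / T
          = (∑ y ∈ univ.erase yh, (p y - m y)) * (q yh - m yh) / T := by
            rw [Finset.sum_mul, Finset.sum_div]
        _ = (q yh - m yh) * T / T := by
            rw [hsum, sub_mul, hprod yh, sub_zero, mul_comm]
        _ = q yh - m yh := hdivT _ (hm0q yh) (hle_q yh)
    rw [h1, h2]
    ring
  · rw [Fintype.sum_prod_type]
    have hrow : ∀ y : 𝒴, (∑ yh : 𝒴, if (y, yh).2 ≠ (y, yh).1 then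
        (if (y, yh).1 = (y, yh).2 then m (y, yh).1
          else (p (y, yh).1 - m (y, yh).1) * (q (y, yh).2 - m (y, yh).2) / T) else 0)
        = p y - m y := by
      intro y
      have : ∀ yh : 𝒴, (if yh ≠ y then
          (if y = yh then m y else (p y - m y) * (q yh - m yh) / T) else 0)
          = (if yh ≠ y then (p y - m y) * (q yh - m yh) / T else 0) := by
        intro yh
        by_cases h : yh = y
        · simp [h]
        · simp [h, Ne.symm h]
      simp only [this]
      rw [← Finset.sum_filter, Finset.filter_ne']
      have hsum : ∑ yh ∈ univ.erase y, (q yh - m yh) = T - (q y - m y) := by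
        rw [Finset.sum_erase_eq_sub (mem_univ y), hTq]
      calc ∑ yh ∈ univ.erase y, (p y - m y) * (q yh - m yh) / T
          = (p y - m y) * (∑ yh ∈ univ.erase y, (q yh - m yh)) / T := by
            rw [Finset.mul_sum, Finset.sum_div]
        _ = (p y - m y) * T / T := by
            rw [hsum, mul_sub, hprod y, sub_zero]
        _ = p y - m y := hdivT _ (hm0 y) (hle_p y)
    rw [Finset.sum_congr rfl (fun y _ => hrow y)]
    have : ∑ y, |q y - p y| = 2 * T := by
      rw [Finset.sum_congr rfl (fun y _ => habs y), Finset.sum_add_distrib, hTq, hT]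
      ring
    rw [this, ← hT]
    ring

lemma coupling_lb {𝒴 : Type*} [Fintype 𝒴] [DecidableEq 𝒴]
    (J : 𝒴 × 𝒴 → ℝ) (p : 𝒴 → ℝ) (hJ0 : ∀ z, 0 ≤ J z)
    (hrow : ∀ y, ∑ yh, J (y, yh) = p y) :
    (1/2) * ∑ y, |(∑ y', J (y', y)) - p y| ≤
      ∑ z : 𝒴 × 𝒴, if z.2 ≠ z.1 then J z else 0 := by
  classical
  set q : 𝒴 → ℝ := fun y => ∑ y', J (y', y) with hq
  have hdp : ∀ y, J (y, y) ≤ p y := by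
    intro y
    rw [← hrow y]
    exact Finset.single_le_sum (f := fun yh => J (y, yh)) (fun i _ => hJ0 _) (mem_univ y)
  have hdq : ∀ y, J (y, y) ≤ q y := by
    intro y
    exact Finset.single_le_sum (f := fun y' => J (y', y)) (fun i _ => hJ0 _) (mem_univ y)
  have habs : ∀ y, |q y - p y| ≤ (p y - J (y, y)) + (q y - J (y, y)) := by
    intro y
    rw [abs_le]
    constructor <;> [linarith [hdq y]; linarith [hdp y]]
  have hsp : ∑ y, p y = ∑ z : 𝒴 × 𝒴, J z := by
    rw [Fintype.sum_prod_type]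
    exact (Finset.sum_congr rfl fun y _ => hrow y).symm
  have hsq : ∑ y, q y = ∑ z : 𝒴 × 𝒴, J z := by
    rw [Fintype.sum_prod_type, Finset.sum_comm]
  have hsplit : (∑ z : 𝒴 × 𝒴, if z.2 ≠ z.1 then J z else 0)
      = (∑ z : 𝒴 × 𝒴, J z) - ∑ y, J (y, y) := by
    have h1 : ∀ z : 𝒴 × 𝒴, (if z.2 ≠ z.1 then J z else 0)
        = J z - (if z.2 = z.1 then J z else 0) := by
      intro z
      by_cases h : z.2 = z.1 <;> simp [h]
    rw [Finset.sum_congr rfl fun z _ => h1 z, Finset.sum_sub_distrib]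
    congr 1
    rw [Fintype.sum_prod_type]
    apply Finset.sum_congr rfl
    intro y _
    simp
  rw [hsplit]
  have hle : ∑ y, |q y - p y| ≤ ∑ y, ((p y - J (y, y)) + (q y - J (y, y))) :=
    Finset.sum_le_sum fun y _ => habs y
  have heq : ∑ y, ((p y - J (y, y)) + (q y - J (y, y)))
      = 2 * ((∑ z : 𝒴 × 𝒴, J z) - ∑ y, J (y, y)) := by
    rw [Finset.sum_add_distrib, Finset.sum_sub_distrib, Finset.sum_sub_distrib, hsp, hsq]
    ring
  rw [heq] at hle
  linarith

lemma sInf_eq_of_subset_of_dom {A B : Set ℝ} (hAB : A ⊆ B)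
    (hdom : ∀ r ∈ B, ∃ a ∈ A, a ≤ r) (hnn : ∀ r ∈ B, (0:ℝ) ≤ r) :
    sInf A = sInf B := by
  rcases B.eq_empty_or_nonempty with hB | hB
  · have hA : A = ∅ := Set.subset_empty_iff.mp (hB ▸ hAB)
    rw [hA, hB]
  · have hbddB : BddBelow B := ⟨0, fun r hr => hnn r hr⟩
    have hAne : A.Nonempty := by
      obtain ⟨b, hb⟩ := hB
      obtain ⟨a, ha, -⟩ := hdom b hb
      exact ⟨a, ha⟩
    have hbddA : BddBelow A := hbddB.mono hAB
    refine le_antisymm (le_csInf hB fun b hb => ?_) (csInf_le_csInf hbddB hAne hAB)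
    obtain ⟨a, ha, hab⟩ := hdom b hb
    exact (csInf_le hbddA ha).trans hab




open Finset in
/-- The fairness-constrained minimization of the expected total
variation `E_{P_{X,S}}[TV(Q_{Ŷ|X,S}, P_{Y|X,S})]` over conditional rules
`Q_{Ŷ|X,S}` has the same optimal value as the joint-coupling optimal transport
problem minimizing `E[1{Ŷ ≠ Y}]` over joint conditionals `Q_{Y,Ŷ|X,S}` subject
to the marginal constraint `Q_{Y|X,S} = P_{Y|X,S}` and the same fairness
constraint on the induced Ŷ-marginals. -/
theorem fair_tv_problem_eq_coupling_problem
    {𝒳 𝒮 𝒴 : Type*} [Fintype 𝒳] [Fintype 𝒮] [Fintype 𝒴] [DecidableEq 𝒴]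
    (P : 𝒳 × 𝒮 × 𝒴 → ℝ)
    (hP0 : ∀ z, 0 ≤ P z) (hP1 : ∑ z, P z = 1)
    (pXS : 𝒳 → 𝒮 → ℝ) (hpXS : ∀ x s, pXS x s = ∑ y, P (x, s, y))
    (hpos : ∀ x s, 0 < pXS x s)
    (pS : 𝒮 → ℝ) (hpS : ∀ s, pS s = ∑ x, pXS x s)
    (condP : 𝒳 → 𝒮 → 𝒴 → ℝ) (hcondP : ∀ x s y, condP x s y = P (x, s, y) / pXS x s)
    (d : (𝒴 → ℝ) → (𝒴 → ℝ) → ℝ) (ε : ℝ) :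
    sInf {r : ℝ | ∃ Q : 𝒳 → 𝒮 → 𝒴 → ℝ,
        (∀ x s y, 0 ≤ Q x s y) ∧ (∀ x s, ∑ y, Q x s y = 1) ∧
        (∑ s, pS s *
            d (fun y => (∑ x, pXS x s * Q x s y) / pS s)
              (fun y => ∑ x, ∑ s', pXS x s' * Q x s' y) ≤ ε) ∧
        r = ∑ x, ∑ s, pXS x s *
              ((1 / 2) * ∑ y, |Q x s y - condP x s y|)} =
    sInf {r : ℝ | ∃ QJ : 𝒳 → 𝒮 → 𝒴 × 𝒴 → ℝ,
        (∀ x s z, 0 ≤ QJ x s z) ∧ (∀ x s, ∑ z, QJ x s z = 1) ∧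
        -- marginal constraint Q_{Y|X,S} = P_{Y|X,S} (first coordinate is Y)
        (∀ x s y, ∑ yh, QJ x s (y, yh) = condP x s y) ∧
        -- fairness constraint on the induced Ŷ-marginals (second coordinate is Ŷ)
        (∑ s, pS s *
            d (fun yh => (∑ x, pXS x s * ∑ y, QJ x s (y, yh)) / pS s)
              (fun yh => ∑ x, ∑ s', pXS x s' * ∑ y, QJ x s' (y, yh)) ≤ ε) ∧
        r = ∑ x, ∑ s, pXS x s *
              (∑ z : 𝒴 × 𝒴, if z.2 ≠ z.1 then QJ x s z else 0)} := by
  classical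
  have hc0 : ∀ x s y, 0 ≤ condP x s y := by
    intro x s y
    rw [hcondP]
    exact div_nonneg (hP0 _) (hpos x s).le
  have hc1 : ∀ x s, ∑ y, condP x s y = 1 := by
    intro x s
    simp only [hcondP]
    rw [← Finset.sum_div, ← hpXS, div_self (hpos x s).ne']
  apply sInf_eq_of_subset_of_dom
  · -- A ⊆ B
    rintro r ⟨Q, hQ0, hQ1, hQf, hQv⟩
    obtain ⟨J, hJ0, hJr, hJc, hJcost⟩ :
        ∃ J : 𝒳 → 𝒮 → 𝒴 × 𝒴 → ℝ,
          (∀ x s z, 0 ≤ J x s z) ∧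
          (∀ x s y, ∑ yh, J x s (y, yh) = condP x s y) ∧
          (∀ x s yh, ∑ y, J x s (y, yh) = Q x s yh) ∧
          (∀ x s, (∑ z : 𝒴 × 𝒴, if z.2 ≠ z.1 then J x s z else 0)
            = (1/2) * ∑ y, |Q x s y - condP x s y|) := by
      have h : ∀ x s, ∃ J : 𝒴 × 𝒴 → ℝ, (∀ z, 0 ≤ J z) ∧
          (∀ y, ∑ yh, J (y, yh) = condP x s y) ∧
          (∀ yh, ∑ y, J (y, yh) = Q x s yh) ∧
          (∑ z : 𝒴 × 𝒴, if z.2 ≠ z.1 then J z else 0)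
            = (1/2) * ∑ y, |Q x s y - condP x s y| :=
        fun x s => coupling_exists (condP x s) (Q x s) (hc0 x s) (hQ0 x s)
          (hc1 x s) (hQ1 x s)
      choose J h0 h1 h2 h3 using h
      exact ⟨J, fun x s z => h0 x s z, fun x s y => h1 x s y,
        fun x s yh => h2 x s yh, fun x s => h3 x s⟩
    refine ⟨J, hJ0, ?_, hJr, ?_, ?_⟩
    · intro x s
      rw [Fintype.sum_prod_type]
      rw [Finset.sum_congr rfl fun y _ => hJr x s y]
      exact hc1 x s
    · simp only [hJc]
      exact hQf
    · rw [hQv]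
      refine Finset.sum_congr rfl fun x _ => Finset.sum_congr rfl fun s _ => ?_
      rw [hJcost x s]
  · -- domination: ∀ r ∈ B, ∃ a ∈ A, a ≤ r
    rintro r ⟨QJ, hQJ0, hQJ1, hQJm, hQJf, hQJv⟩
    refine ⟨∑ x, ∑ s, pXS x s *
        ((1 / 2) * ∑ y, |(∑ y', QJ x s (y', y)) - condP x s y|),
      ⟨fun x s yh => ∑ y, QJ x s (y, yh), ?_, ?_, ?_, rfl⟩, ?_⟩
    · intro x s yh
      exact Finset.sum_nonneg fun y _ => hQJ0 x s _
    · intro x s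
      rw [Finset.sum_comm, ← Fintype.sum_prod_type]
      exact hQJ1 x s
    · exact hQJf
    · rw [hQJv]
      refine Finset.sum_le_sum fun x _ => Finset.sum_le_sum fun s _ => ?_
      refine mul_le_mul_of_nonneg_left ?_ (hpos x s).le
      have := coupling_lb (QJ x s) (condP x s) (hQJ0 x s) (hQJm x s)
      exact this
  · -- nonnegativity of B
    rintro r ⟨QJ, hQJ0, hQJ1, hQJm, hQJf, hQJv⟩
    rw [hQJv]
    refine Finset.sum_nonneg fun x _ => Finset.sum_nonneg fun s _ => ?_
    refine mul_nonneg (hpos x s).le (Finset.sum_nonneg fun z _ => ?_)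
    split_ifs
    · exact hQJ0 x s z
    · exact le_refl 0
end
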